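/- Let G be a graph with maximum degree at most d. Let H be a connected subgraph of G on vertex set V(H), and let v ∈ V(H). Then there exists a 2-tree T of G with v ∈ T ⊆ V(H) and |T| ≥ |V(H)| / (d + 1). -/

import Mathlib

/-- The auxiliary "distance-2" graph: two vertices are adjacent iff their
distance in `G` is exactly 2. -/
def auxGraph {V : Type*} (G : SimpleGraph V) : SimpleGraph V :=
  SimpleGraph.fromRel (fun u v => G.dist u v = 2)

/-- A 2-tree in `G`: a finite set of vertices pairwise at distance at least 2,
connected in the auxiliary distance-2 graph. -/
def IsTwoTree {V : Type*} (G : SimpleGraph V) (T : Finset V) : Prop :=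
  (∀ u ∈ T, ∀ v ∈ T, u ≠ v → 2 ≤ G.dist u v) ∧
  (SimpleGraph.induce (T : Set V) (auxGraph G)).Connected

open SimpleGraph in
lemma singleton_induce_connected {V : Type*} (G : SimpleGraph V) (u : V) :
    (G.induce {u}).Connected := by
  haveI : Nonempty ({u} : Set V) := ⟨⟨u, rfl⟩⟩
  refine ⟨?_⟩
  rintro ⟨a, ha⟩ ⟨b, hb⟩
  simp only [Set.mem_singleton_iff] at ha hb
  subst ha; subst hb
  exact SimpleGraph.Reachable.refl _

open SimpleGraph in
lemma cross_lemma {V : Type*} {G : SimpleGraph V} {S : Set V} (P : V → Prop)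
    {x y : S} (W : (G.induce S).Walk x y) (hx : ¬ P ↑x) (hy : P ↑y) :
    ∃ a b : S, (G.induce S).Adj a b ∧ ¬ P ↑a ∧ P ↑b := by
  induction W with
  | nil => exact absurd hy hx
  | @cons u w _ h q ih =>
    by_cases hc : P ↑w
    · exact ⟨u, w, h, hx, hc⟩
    · exact ih hc hy

open SimpleGraph in
/-- closed neighborhood of a finset -/
noncomputable def clN {V : Type*} [Fintype V] [DecidableEq V] (G : SimpleGraph V)
    [DecidableRel G.Adj] (T : Finset V) : Finset V :=
  T.biUnion (fun t => insert t (G.neighborFinset t))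

lemma mem_clN {V : Type*} [Fintype V] [DecidableEq V] {G : SimpleGraph V}
    [DecidableRel G.Adj] {T : Finset V} {x : V} :
    x ∈ clN G T ↔ ∃ t ∈ T, x = t ∨ G.Adj t x := by
  simp [clN, SimpleGraph.mem_neighborFinset]

open SimpleGraph in
lemma grow {V : Type*} [Fintype V] [DecidableEq V] (G : SimpleGraph V)
    [DecidableRel G.Adj] (S : Set V) (hconn : (SimpleGraph.induce S G).Connected)
    (v : V) (hv : v ∈ S) :
    ∀ n (T : Finset V), v ∈ T → (T : Set V) ⊆ S →
      (∀ u ∈ T, ∀ w ∈ T, u ≠ w → 2 ≤ G.dist u w) →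
      (SimpleGraph.induce (T : Set V) (auxGraph G)).Connected →
      (S \ (clN G T : Set V)).ncard ≤ n →
      ∃ T' : Finset V, v ∈ T' ∧ (T' : Set V) ⊆ S ∧
        (∀ u ∈ T', ∀ w ∈ T', u ≠ w → 2 ≤ G.dist u w) ∧
        (SimpleGraph.induce (T' : Set V) (auxGraph G)).Connected ∧
        S ⊆ (clN G T' : Set V) := by
  intro n
  induction n with
  | zero =>
    intro T hvT hTS hdist hTconn hcard
    refine ⟨T, hvT, hTS, hdist, hTconn, ?_⟩
    have : (S \ (clN G T : Set V)) = ∅ :=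
      (Set.ncard_eq_zero (Set.toFinite _)).mp (Nat.le_zero.mp hcard)
    intro x hx
    by_contra hxn
    exact absurd this (Set.nonempty_iff_ne_empty.mp ⟨x, hx, hxn⟩)
  | succ n ih =>
    intro T hvT hTS hdist hTconn hcard
    by_cases hS : S ⊆ (clN G T : Set V)
    · exact ⟨T, hvT, hTS, hdist, hTconn, hS⟩
    · obtain ⟨b, hbS, hbN⟩ := Set.not_subset.mp hS
      -- walk from b to v in induce S G
      have hreach := hconn ⟨b, hbS⟩ ⟨v, hv⟩
      obtain ⟨W⟩ := hreach
      have hvN : (v : V) ∈ clN G T := mem_clN.mpr ⟨v, hvT, Or.inl rfl⟩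
      obtain ⟨a, c, hadj, haN, hcN⟩ :=
        cross_lemma (fun x => x ∈ clN G T) W hbN hvN
      -- a ∈ S, not in N[T]; c ∈ S, in N[T]; G.Adj a c
      have hGac : G.Adj ↑a ↑c := hadj
      obtain ⟨t, htT, hct⟩ := mem_clN.mp hcN
      -- t ∈ T, c = t or Adj t c
      have haNall : ∀ t' ∈ T, (a : V) ≠ t' ∧ ¬ G.Adj t' ↑a := by
        intro t' ht'
        constructor
        · rintro rfl; exact haN (mem_clN.mpr ⟨↑a, ht', Or.inl rfl⟩)
        · intro hadj'; exact haN (mem_clN.mpr ⟨t', ht', Or.inr hadj'⟩)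
      have hct' : G.Adj t ↑c := by
        rcases hct with rfl | h
        · exact absurd hGac.symm (haNall _ htT).2
        · exact h
      -- walk a - c - t in G
      have wACT : G.Walk (↑a) t := Walk.cons hGac (Walk.cons hct'.symm Walk.nil)
      -- reachability from any T member to a
      have hreachS : ∀ x ∈ S, ∀ y ∈ S, G.Reachable x y := by
        intro x hx y hy
        exact Reachable.map (⟨Subtype.val, fun h => h⟩ : G.induce S →g G)
          (hconn ⟨x, hx⟩ ⟨y, hy⟩)
      have hdist_a : ∀ t' ∈ T, 2 ≤ G.dist ↑a t' := by
        intro t' ht'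
        obtain ⟨hne, hnadj⟩ := haNall t' ht'
        have hre : G.Reachable ↑a t' := wACT.reachable.trans (hreachS t (hTS htT) t' (hTS ht'))
        have h0 : 0 < G.dist ↑a t' := hre.pos_dist_of_ne hne
        have h1 : G.dist ↑a t' ≠ 1 := by
          intro h; exact hnadj ((dist_eq_one_iff_adj.mp h).symm)
        omega
      have hdat : G.dist ↑a t = 2 := by
        have hle : G.dist ↑a t ≤ 2 := by
          simpa using dist_le (Walk.cons hGac (Walk.cons hct'.symm Walk.nil))
        have := hdist_a t htT
        omega
      -- new set
      set T' : Finset V := insert ↑a T with hT'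
      have haS : (a : V) ∈ S := a.2
      have hT'S : (T' : Set V) ⊆ S := by
        rw [hT', Finset.coe_insert]
        exact Set.insert_subset haS hTS
      have hdist' : ∀ u ∈ T', ∀ w ∈ T', u ≠ w → 2 ≤ G.dist u w := by
        intro u hu w hw hne
        rw [hT', Finset.mem_insert] at hu hw
        rcases hu with rfl | hu
        · rcases hw with rfl | hw
          · exact absurd rfl hne
          · exact hdist_a w hw
        · rcases hw with rfl | hw
          · rw [SimpleGraph.dist_comm]; exact hdist_a u hu
          · exact hdist u hu w hw hne
      have hnaT : (↑a : V) ∉ T := fun h => (haNall _ h).1 rfl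
      have hauxadj : (auxGraph G).Adj ↑a t := by
        have hne : (↑a : V) ≠ t := (haNall t htT).1
        simp only [auxGraph, SimpleGraph.fromRel_adj]
        exact ⟨hne, Or.inl hdat⟩
      have hconn' : (SimpleGraph.induce (T' : Set V) (auxGraph G)).Connected := by
        have : (T' : Set V) = {(↑a : V)} ∪ (T : Set V) := by
          rw [hT', Finset.coe_insert, Set.insert_eq]
        rw [this]
        exact connected_induce_union (singleton_induce_connected _ _).preconnected hTconn.preconnected
          rfl (by exact htT) hauxadj
      have hmono : (S \ (clN G T' : Set V)) ⊂ (S \ (clN G T : Set V)) := by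
        constructor
        · intro x hx
          refine ⟨hx.1, fun hxN => hx.2 ?_⟩
          obtain ⟨t', ht', h⟩ := mem_clN.mp hxN
          exact mem_clN.mpr ⟨t', by simp [hT', ht'], h⟩
        · intro hsub
          have ha1 : (↑a : V) ∈ S \ (clN G T : Set V) := ⟨haS, haN⟩
          have ha2 := hsub ha1
          exact ha2.2 (mem_clN.mpr ⟨↑a, by simp [hT'], Or.inl rfl⟩)
      have hcard' : (S \ (clN G T' : Set V)).ncard ≤ n := by
        have := Set.ncard_lt_ncard hmono (Set.toFinite _)
        omega
      exact ih T' (by simp [hT', hvT]) hT'S hdist' hconn' hcard'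

theorem stmt4 {V : Type*} [Fintype V] [DecidableEq V] (G : SimpleGraph V)
    [DecidableRel G.Adj] (d : ℕ) (hdeg : ∀ v, G.degree v ≤ d)
    (S : Set V) (hconn : (SimpleGraph.induce S G).Connected) (v : V) (hv : v ∈ S) :
    ∃ T : Finset V, IsTwoTree G T ∧ v ∈ T ∧ (T : Set V) ⊆ S ∧
      (S.ncard : ℝ) / ((d : ℝ) + 1) ≤ (T.card : ℝ) := by
  obtain ⟨T, hvT, hTS, hdist, hTconn, hcov⟩ :=
    grow G S hconn v hv (S \ (clN G {v} : Set V)).ncard {v}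
      (Finset.mem_singleton_self v)
      (by simp [hv])
      (by intro u hu w hw hne; simp only [Finset.mem_singleton] at hu hw; subst hu; subst hw;
          exact absurd rfl hne)
      (by rw [Finset.coe_singleton]; exact singleton_induce_connected _ _)
      le_rfl
  refine ⟨T, ⟨hdist, hTconn⟩, hvT, hTS, ?_⟩
  have hcount : S.ncard ≤ T.card * (d + 1) := by
    calc S.ncard ≤ (clN G T : Set V).ncard := Set.ncard_le_ncard hcov (Set.toFinite _)
    _ = (clN G T).card := Set.ncard_coe_finset _
    _ ≤ ∑ t ∈ T, (insert t (G.neighborFinset t)).card := Finset.card_biUnion_le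
    _ ≤ ∑ t ∈ T, (d + 1) := by
        apply Finset.sum_le_sum
        intro t _
        calc (insert t (G.neighborFinset t)).card ≤ (G.neighborFinset t).card + 1 :=
              Finset.card_insert_le _ _
        _ = G.degree t + 1 := by rw [SimpleGraph.card_neighborFinset_eq_degree]
        _ ≤ d + 1 := by have := hdeg t; omega
    _ = T.card * (d + 1) := by rw [Finset.sum_const, smul_eq_mul]
  rw [div_le_iff₀ (by positivity)]
  -- cast
  exact_mod_cast hcount
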